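/- For every integer n ≥ 2 and all i, j ∈ {1, …, n−1}, the entries of the matrix C_n satisfy c^{(n)}_{i,j} + Σ_{s=1}^{n} c^{(n)}_{s, i+j+1} = Σ_{s=i}^{n} c^{(n)}_{s, j+1}, where by convention c^{(n)}_{a,b} := 0 whenever a or b lies outside {1, …, n}. -/
import Mathlib


/-- The entries `c^{(n)}_{i,j}` of the matrices `C_n`, defined by `C_1 = (1)` and
`C_{n+1} = (τ C_n) ⊕ (1)`, where `(τ A)_{i,j} = Σ_{s=i-1}^{n} a_{s,j}` (with the
convention `a_{0,j} = 0`). Entries with an index outside `{1, …, n}` are `0`. -/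
def cMat : ℕ → ℕ → ℕ → ℕ
  | 0, _, _ => 0
  | 1, i, j => if i = 1 ∧ j = 1 then 1 else 0
  | n + 2, i, j =>
      if 1 ≤ i ∧ i ≤ n + 1 ∧ 1 ≤ j ∧ j ≤ n + 1 then
        ∑ s ∈ Finset.Icc (i - 1) (n + 1), cMat (n + 1) s j
      else if i = n + 2 ∧ j = n + 2 then 1 else 0

open Finset


lemma cMat_rec (n i j : ℕ) (h1 : 1 ≤ i) (h2 : i ≤ n+1) (h3 : 1 ≤ j) (h4 : j ≤ n+1) :
    cMat (n+2) i j = ∑ s ∈ Icc (i-1) (n+1), cMat (n+1) s j := by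
  simp only [cMat]
  rw [if_pos ⟨h1, h2, h3, h4⟩]

lemma cMat_left_zero (n j : ℕ) : cMat n 0 j = 0 := by
  rcases n with _ | _ | n <;> simp [cMat]

lemma cMat_right_zero (n i : ℕ) : cMat n i 0 = 0 := by
  rcases n with _ | _ | n <;> simp [cMat]

lemma cMat_left_gt (n i j : ℕ) (h : n < i) : cMat n i j = 0 := by
  rcases n with _ | _ | n
  · rfl
  · simp [cMat]; omega
  · simp only [cMat]
    rw [if_neg (by omega), if_neg (by omega)]

lemma cMat_right_gt (n i j : ℕ) (h : n < j) : cMat n i j = 0 := by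
  rcases n with _ | _ | n
  · rfl
  · simp [cMat]; omega
  · simp only [cMat]
    rw [if_neg (by omega), if_neg (by omega)]

lemma cMat_row_last (n j : ℕ) (hn : 1 ≤ n) : cMat n n j = if j = n then 1 else 0 := by
  rcases n with _ | _ | n
  · omega
  · simp [cMat]
  · simp only [cMat]
    rw [if_neg (by omega)]
    by_cases h : j = n + 2
    · simp [h]
    · simp [h]

lemma cMat_col_last (n i : ℕ) (hn : 1 ≤ n) : cMat n i n = if i = n then 1 else 0 := by
  rcases n with _ | _ | n
  · omega
  · simp [cMat]
  · simp only [cMat]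
    rw [if_neg (by omega)]
    by_cases h : i = n + 2
    · simp [h]
    · simp [h]

lemma sum_Icc_drop_zero (b : ℕ) (f : ℕ → ℕ) (h : f 0 = 0) :
    ∑ s ∈ Icc 0 b, f s = ∑ s ∈ Icc 1 b, f s := by
  refine (Finset.sum_subset (Icc_subset_Icc (by omega) le_rfl) ?_).symm
  intro x hx hx'
  simp only [mem_Icc] at hx hx'
  have : x = 0 := by omega
  simp [this, h]

lemma sum_Icc_shift (a b k : ℕ) (f : ℕ → ℕ) :
    ∑ t ∈ Icc a b, f (t + k) = ∑ u ∈ Icc (a + k) (b + k), f u := by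
  rw [← Finset.map_add_right_Icc, Finset.sum_map]
  rfl

lemma cMat_row_secondlast : ∀ m j : ℕ, 1 ≤ j → j ≤ m + 1 → cMat (m+2) (m+1) j = 1 := by
  intro m
  induction m with
  | zero =>
    intro j h1 h2
    have : j = 1 := by omega
    subst this; decide
  | succ m ih =>
    intro j h1 h2
    rw [cMat_rec _ _ _ (by omega) (by omega) h1 h2]
    have he : (m + 2 : ℕ) - 1 = m + 1 := by omega
    rw [he, Finset.sum_Icc_succ_top (by omega), Finset.Icc_self, Finset.sum_singleton]
    by_cases hj : j = m + 3
    · omega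
    · by_cases hj2 : j = m + 2
      · rw [hj2, cMat_col_last _ _ (by omega), cMat_row_last _ _ (by omega)]
        simp
      · rw [ih j h1 (by omega), cMat_row_last _ _ (by omega), if_neg hj2]

lemma cMat_col_secondlast (m i : ℕ) (h1 : 1 ≤ i) (h2 : i ≤ m + 1) : cMat (m+2) i (m+1) = 1 := by
  rw [cMat_rec _ _ _ h1 (by omega) (by omega) (by omega)]
  have : ∀ s ∈ Icc (i-1) (m+1), cMat (m+1) s (m+1) = if s = m+1 then 1 else 0 := by
    intro s _; exact cMat_col_last _ _ (by omega)
  rw [Finset.sum_congr rfl this, Finset.sum_ite_eq' (Icc (i-1) (m+1)) (m+1) (fun _ => 1)]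
  rw [if_pos (by simp only [mem_Icc]; omega)]

lemma cMat_row12 (m j : ℕ) : cMat (m+3) 1 j = cMat (m+3) 2 j := by
  by_cases hj : 1 ≤ j ∧ j ≤ m + 2
  · rw [cMat_rec _ _ _ le_rfl (by omega) hj.1 hj.2, cMat_rec _ _ _ (by omega) (by omega) hj.1 hj.2]
    simpa using sum_Icc_drop_zero (m+2) (fun s => cMat (m+2) s j) (cMat_left_zero _ _)
  · rcases Nat.lt_or_ge j (m+3) with h | h
    · have : j = 0 := by omega
      rw [this, cMat_right_zero, cMat_right_zero]
    · rcases Nat.eq_or_lt_of_le h with h' | h'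
      · subst h'
        rw [cMat_col_last _ _ (by omega), cMat_col_last _ _ (by omega)]
        rw [if_neg (by omega), if_neg (by omega)]
      · rw [cMat_right_gt _ _ _ h', cMat_right_gt _ _ _ h']

lemma cMat_col12 : ∀ m i : ℕ, cMat (m+3) i 1 = cMat (m+3) i 2 := by
  intro m
  induction m with
  | zero =>
    intro i
    rcases Nat.lt_or_ge 3 i with h | h
    · rw [cMat_left_gt _ _ _ h, cMat_left_gt _ _ _ h]
    · interval_cases i <;> decide
  | succ m ih =>
    intro i
    by_cases hi : 1 ≤ i ∧ i ≤ m + 3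
    · rw [cMat_rec _ _ _ hi.1 hi.2 (by omega) (by omega), cMat_rec _ _ _ hi.1 hi.2 (by omega) (by omega)]
      exact Finset.sum_congr rfl fun s _ => ih s
    · rcases Nat.lt_or_ge i (m+4) with h | h
      · have : i = 0 := by omega
        rw [this, cMat_left_zero, cMat_left_zero]
      · rcases Nat.eq_or_lt_of_le h with h' | h'
        · subst h'
          rw [cMat_row_last _ _ (by omega), cMat_row_last _ _ (by omega)]
          rw [if_neg (by omega), if_neg (by omega)]
        · rw [cMat_left_gt _ _ _ h', cMat_left_gt _ _ _ h']

lemma cMat_cross : ∀ n i j : ℕ, 1 ≤ i → i ≤ n → 1 ≤ j → j ≤ n →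
    ∑ s ∈ Icc (i-1) n, cMat n s j = ∑ s ∈ Icc (j-1) n, cMat n i s := by
  intro n
  induction n with
  | zero => intro i j h1 h2 h3 h4; omega
  | succ M ih =>
    match M, ih with
    | 0, _ =>
      intro i j h1 h2 h3 h4
      have hi : i = 1 := by omega
      have hj : j = 1 := by omega
      subst hi; subst hj; rfl
    | 1, _ =>
      intro i j h1 h2 h3 h4
      interval_cases i <;> interval_cases j <;> decide
    | (m+2), ih =>
      have core : ∀ i j : ℕ, 2 ≤ i → i ≤ m + 3 → 2 ≤ j → j ≤ m + 3 →
          ∑ s ∈ Icc (i-1) (m+3), cMat (m+3) s j = ∑ s ∈ Icc (j-1) (m+3), cMat (m+3) i s := by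
        intro i j hi2 hi3 hj2 hj3
        by_cases hi : i = m + 3
        · subst hi
          have hL : ∑ s ∈ Icc (m+3-1) (m+3), cMat (m+3) s j
              = cMat (m+3) (m+2) j + cMat (m+3) (m+3) j := by
            show ∑ s ∈ Icc (m+2) (m+2+1), cMat (m+3) s j = _
            rw [Finset.sum_Icc_succ_top (by omega), Finset.Icc_self, Finset.sum_singleton]
          rw [hL]
          have hR : ∑ s ∈ Icc (j-1) (m+3), cMat (m+3) (m+3) s = 1 := by
            have : ∀ s ∈ Icc (j-1) (m+3), cMat (m+3) (m+3) s = if s = m+3 then 1 else 0 :=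
              fun s _ => cMat_row_last _ _ (by omega)
            rw [Finset.sum_congr rfl this,
              Finset.sum_ite_eq' (Icc (j-1) (m+3)) (m+3) (fun _ => 1),
              if_pos (by simp only [mem_Icc]; omega)]
          rw [hR]
          by_cases hj : j = m + 3
          · subst hj
            rw [cMat_col_last _ _ (by omega), cMat_row_last _ _ (by omega)]
            simp
          · rw [cMat_row_secondlast (m+1) j (by omega) (by omega),
              cMat_row_last _ _ (by omega), if_neg hj]
        · by_cases hj : j = m + 3
          · subst hj
            have hL : ∑ s ∈ Icc (i-1) (m+3), cMat (m+3) s (m+3) = 1 := by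
              have : ∀ s ∈ Icc (i-1) (m+3), cMat (m+3) s (m+3) = if s = m+3 then 1 else 0 :=
                fun s _ => cMat_col_last _ _ (by omega)
              rw [Finset.sum_congr rfl this,
                Finset.sum_ite_eq' (Icc (i-1) (m+3)) (m+3) (fun _ => 1),
                if_pos (by simp only [mem_Icc]; omega)]
            have hR : ∑ s ∈ Icc (m+3-1) (m+3), cMat (m+3) i s
                = cMat (m+3) i (m+2) + cMat (m+3) i (m+3) := by
              show ∑ s ∈ Icc (m+2) (m+2+1), cMat (m+3) i s = _
              rw [Finset.sum_Icc_succ_top (by omega), Finset.Icc_self, Finset.sum_singleton]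
            rw [hL, hR, cMat_col_secondlast (m+1) i (by omega) (by omega),
              cMat_col_last _ _ (by omega), if_neg hi]
          · -- main case : i, j ≤ m+2
            have hL : ∑ s ∈ Icc (i-1) (m+3), cMat (m+3) s j
                = ∑ s ∈ Icc (i-1) (m+2), ∑ t ∈ Icc (s-1) (m+2), cMat (m+2) t j := by
              show ∑ s ∈ Icc (i-1) (m+2+1), cMat (m+3) s j = _
              rw [Finset.sum_Icc_succ_top (by omega),
                cMat_row_last _ _ (by omega), if_neg hj, add_zero]
              refine Finset.sum_congr rfl fun s hs => ?_
              simp only [mem_Icc] at hs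
              exact cMat_rec (m+1) s j (by omega) (by omega) (by omega) (by omega)
            have hR : ∑ s ∈ Icc (j-1) (m+3), cMat (m+3) i s
                = ∑ s ∈ Icc (j-1) (m+2), ∑ t ∈ Icc (i-1) (m+2), cMat (m+2) t s := by
              show ∑ s ∈ Icc (j-1) (m+2+1), cMat (m+3) i s = _
              rw [Finset.sum_Icc_succ_top (by omega),
                cMat_col_last _ _ (by omega), if_neg hi, add_zero]
              refine Finset.sum_congr rfl fun s hs => ?_
              simp only [mem_Icc] at hs
              exact cMat_rec (m+1) i s (by omega) (by omega) (by omega) (by omega)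
            rw [hL, hR, Finset.sum_comm]
            refine Finset.sum_congr rfl fun t ht => ?_
            simp only [mem_Icc] at ht
            exact ih t j (by omega) (by omega) (by omega) (by omega)
      intro i j h1 h2 h3 h4
      by_cases hi : i = 1
      · subst hi
        by_cases hj : j = 1
        · subst hj
          calc ∑ s ∈ Icc (1-1) (m+3), cMat (m+3) s 1
              = ∑ s ∈ Icc 1 (m+3), cMat (m+3) s 1 :=
                sum_Icc_drop_zero (m+3) (fun s => cMat (m+3) s 1) (cMat_left_zero _ _)
            _ = ∑ s ∈ Icc 1 (m+3), cMat (m+3) s 2 :=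
                Finset.sum_congr rfl fun s _ => cMat_col12 m s
            _ = ∑ s ∈ Icc (2-1) (m+3), cMat (m+3) s 2 := rfl
            _ = ∑ s ∈ Icc (2-1) (m+3), cMat (m+3) 2 s :=
                core 2 2 le_rfl (by omega) le_rfl (by omega)
            _ = ∑ s ∈ Icc 1 (m+3), cMat (m+3) 1 s :=
                Finset.sum_congr rfl fun s _ => (cMat_row12 m s).symm
            _ = ∑ s ∈ Icc (1-1) (m+3), cMat (m+3) 1 s :=
                (sum_Icc_drop_zero (m+3) (fun s => cMat (m+3) 1 s) (cMat_right_zero _ _)).symm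
        · calc ∑ s ∈ Icc (1-1) (m+3), cMat (m+3) s j
              = ∑ s ∈ Icc (2-1) (m+3), cMat (m+3) s j :=
                sum_Icc_drop_zero (m+3) (fun s => cMat (m+3) s j) (cMat_left_zero _ _)
            _ = ∑ s ∈ Icc (j-1) (m+3), cMat (m+3) 2 s :=
                core 2 j le_rfl (by omega) (by omega) h4
            _ = ∑ s ∈ Icc (j-1) (m+3), cMat (m+3) 1 s :=
                Finset.sum_congr rfl fun s _ => (cMat_row12 m s).symm
      · by_cases hj : j = 1
        · subst hj
          calc ∑ s ∈ Icc (i-1) (m+3), cMat (m+3) s 1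
              = ∑ s ∈ Icc (i-1) (m+3), cMat (m+3) s 2 :=
                Finset.sum_congr rfl fun s _ => cMat_col12 m s
            _ = ∑ s ∈ Icc (2-1) (m+3), cMat (m+3) i s :=
                core i 2 (by omega) h2 le_rfl (by omega)
            _ = ∑ s ∈ Icc (1-1) (m+3), cMat (m+3) i s :=
                (sum_Icc_drop_zero (m+3) (fun s => cMat (m+3) i s) (cMat_right_zero _ _)).symm
        · exact core i j (by omega) h2 (by omega) h4

lemma cMat_symm : ∀ n i j : ℕ, cMat n i j = cMat n j i := by
  intro n
  induction n with
  | zero => intro i j; rfl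
  | succ M ih =>
    match M, ih with
    | 0, _ => intro i j; simp [cMat, and_comm]
    | (m+1), ih =>
      intro i j
      by_cases h : 1 ≤ i ∧ i ≤ m+1 ∧ 1 ≤ j ∧ j ≤ m+1
      · rw [cMat_rec m i j h.1 h.2.1 h.2.2.1 h.2.2.2,
          cMat_rec m j i h.2.2.1 h.2.2.2 h.1 h.2.1]
        calc ∑ s ∈ Icc (i-1) (m+1), cMat (m+1) s j
            = ∑ s ∈ Icc (j-1) (m+1), cMat (m+1) i s :=
              cMat_cross (m+1) i j h.1 h.2.1 h.2.2.1 h.2.2.2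
          _ = ∑ s ∈ Icc (j-1) (m+1), cMat (m+1) s i :=
              Finset.sum_congr rfl fun s _ => ih i s
      · have e : ∀ a b : ℕ, cMat (m+2) a b =
            if 1 ≤ a ∧ a ≤ m+1 ∧ 1 ≤ b ∧ b ≤ m+1 then
              ∑ s ∈ Icc (a-1) (m+1), cMat (m+1) s b
            else if a = m+2 ∧ b = m+2 then 1 else 0 := fun a b => rfl
        have hns : ¬(1 ≤ j ∧ j ≤ m+1 ∧ 1 ≤ i ∧ i ≤ m+1) :=
          fun hc => h ⟨hc.2.2.1, hc.2.2.2, hc.1, hc.2.1⟩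
        rw [e i j, e j i, if_neg h, if_neg hns]
        by_cases h2 : i = m+2 ∧ j = m+2
        · rw [if_pos h2, if_pos (show j = m+2 ∧ i = m+2 from ⟨h2.2, h2.1⟩)]
        · rw [if_neg h2, if_neg (show ¬(j = m+2 ∧ i = m+2) from fun hc => h2 ⟨hc.2, hc.1⟩)]

lemma cMat_col_sum (m K : ℕ) (hK : 2 ≤ K) :
    ∑ s ∈ Icc 1 (m+2), cMat (m+2) s K
      = ∑ u ∈ Icc (K-1) (m+1), ∑ s ∈ Icc 1 (m+1), cMat (m+1) s u := by
  by_cases h : K ≤ m + 2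
  · calc ∑ s ∈ Icc 1 (m+2), cMat (m+2) s K
        = ∑ s ∈ Icc 0 (m+2), cMat (m+2) s K :=
          (sum_Icc_drop_zero (m+2) (fun s => cMat (m+2) s K) (cMat_left_zero _ _)).symm
      _ = cMat (m+3) 1 K := (cMat_rec (m+1) 1 K le_rfl (by omega) (by omega) h).symm
      _ = cMat (m+3) K 1 := cMat_symm _ _ _
      _ = ∑ s ∈ Icc (K-1) (m+2), cMat (m+2) s 1 :=
          cMat_rec (m+1) K 1 (by omega) h le_rfl (by omega)
      _ = ∑ s ∈ Icc (K-1) (m+1), cMat (m+2) s 1 + cMat (m+2) (m+2) 1 := by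
          show ∑ s ∈ Icc (K-1) (m+1+1), cMat (m+2) s 1 = _
          rw [Finset.sum_Icc_succ_top (by omega)]
      _ = ∑ s ∈ Icc (K-1) (m+1), cMat (m+2) s 1 := by
          rw [cMat_row_last _ _ (by omega), if_neg (by omega), add_zero]
      _ = ∑ u ∈ Icc (K-1) (m+1), ∑ s ∈ Icc 1 (m+1), cMat (m+1) s u := by
          refine Finset.sum_congr rfl fun u hu => ?_
          simp only [mem_Icc] at hu
          rw [cMat_symm, cMat_rec m 1 u le_rfl (by omega) (by omega) (by omega)]
          exact sum_Icc_drop_zero (m+1) (fun s => cMat (m+1) s u) (cMat_left_zero _ _)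
  · have hL : ∑ s ∈ Icc 1 (m+2), cMat (m+2) s K = 0 :=
      Finset.sum_eq_zero fun s _ => cMat_right_gt _ _ _ (by omega)
    have hR : Icc (K-1) (m+1) = (∅ : Finset ℕ) := Finset.Icc_eq_empty (by omega)
    rw [hL, hR, Finset.sum_empty]

/-- For `n ≥ 2` and `i, j ∈ {1, …, n−1}`:
`c^{(n)}_{i,j} + Σ_{s=1}^{n} c^{(n)}_{s,i+j+1} = Σ_{s=i}^{n} c^{(n)}_{s,j+1}`
(entries with an index outside `{1, …, n}` being `0`). -/
theorem cMat_pascal_identity (n : ℕ) (hn : 2 ≤ n) (i j : ℕ)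
    (hi : i ∈ Finset.Icc 1 (n - 1)) (hj : j ∈ Finset.Icc 1 (n - 1)) :
    cMat n i j + ∑ s ∈ Finset.Icc 1 n, cMat n s (i + j + 1) =
      ∑ s ∈ Finset.Icc i n, cMat n s (j + 1) := by
  revert i j
  induction n, hn using Nat.le_induction with
  | base =>
    intro i j hi hj
    simp only [mem_Icc] at hi hj
    have h1 : i = 1 := by omega
    have h2 : j = 1 := by omega
    subst h1; subst h2; decide
  | succ n hn ih =>
    obtain ⟨m, rfl⟩ : ∃ m, n = m + 2 := ⟨n - 2, by omega⟩
    intro i j hi hj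
    simp only [mem_Icc] at hi hj
    have hi1 : 1 ≤ i := hi.1
    have hi2 : i ≤ m + 2 := by omega
    have hj1 : 1 ≤ j := hj.1
    have hj2 : j ≤ m + 2 := by omega
    by_cases hjtop : j = m + 2
    · subst hjtop
      have h1 : cMat (m+3) i (m+2) = 1 := cMat_col_secondlast (m+1) i hi1 hi2
      have h2 : ∑ s ∈ Icc 1 (m+3), cMat (m+3) s (i + (m+2) + 1) = 0 :=
        Finset.sum_eq_zero fun s _ => cMat_right_gt _ _ _ (by omega)
      have h3 : ∑ s ∈ Icc i (m+3), cMat (m+3) s (m+2+1) = 1 := by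
        have : ∀ s ∈ Icc i (m+3), cMat (m+3) s (m+3) = if s = m+3 then 1 else 0 :=
          fun s _ => cMat_col_last _ _ (by omega)
        rw [show (m+2+1 : ℕ) = m+3 from rfl, Finset.sum_congr rfl this,
          Finset.sum_ite_eq' (Icc i (m+3)) (m+3) (fun _ => 1),
          if_pos (by simp only [mem_Icc]; omega)]
      rw [h1, h2, h3]
    · have hj3 : j ≤ m + 1 := by omega
      by_cases hitop : i = m + 2
      · subst hitop
        have h1 : cMat (m+3) (m+2) j = 1 := cMat_row_secondlast (m+1) j hj1 (by omega)
        have h2 : ∑ s ∈ Icc 1 (m+3), cMat (m+3) s (m+2 + j + 1) = 0 :=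
          Finset.sum_eq_zero fun s _ => cMat_right_gt _ _ _ (by omega)
        have h3 : ∑ s ∈ Icc (m+2) (m+3), cMat (m+3) s (j+1) = 1 := by
          show ∑ s ∈ Icc (m+2) (m+2+1), cMat (m+3) s (j+1) = 1
          rw [Finset.sum_Icc_succ_top (by omega), Finset.Icc_self, Finset.sum_singleton,
            cMat_row_secondlast (m+1) (j+1) (by omega) (by omega),
            cMat_row_last _ _ (by omega), if_neg (by omega)]
        rw [h1, h2, h3]
      · have hi3 : i ≤ m + 1 := by omega
        -- main case
        have ha : cMat (m+3) i j = ∑ t ∈ Icc (i-1) (m+1), cMat (m+2) t j := by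
          rw [cMat_rec (m+1) i j hi1 (by omega) hj1 (by omega)]
          show ∑ t ∈ Icc (i-1) (m+1+1), cMat (m+2) t j = _
          rw [Finset.sum_Icc_succ_top (by omega), cMat_row_last (m+2) j (by omega),
            if_neg (by omega), add_zero]
        have hb : ∑ s ∈ Icc i (m+3), cMat (m+3) s (j+1)
            = ∑ t ∈ Icc (i-1) (m+1), ∑ u ∈ Icc t (m+2), cMat (m+2) u (j+1) := by
          show ∑ s ∈ Icc i (m+2+1), cMat (m+3) s (j+1) = _
          rw [Finset.sum_Icc_succ_top (by omega), cMat_row_last _ _ (by omega),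
            if_neg (by omega), add_zero]
          have hrec : ∀ s ∈ Icc i (m+2), cMat (m+3) s (j+1)
              = ∑ t ∈ Icc (s-1) (m+2), cMat (m+2) t (j+1) := by
            intro s hs
            simp only [mem_Icc] at hs
            exact cMat_rec (m+1) s (j+1) (by omega) (by omega) (by omega) (by omega)
          rw [Finset.sum_congr rfl hrec]
          have hsh := sum_Icc_shift (i-1) (m+1) 1
            (fun s => ∑ t ∈ Icc (s-1) (m+2), cMat (m+2) t (j+1))
          rw [show i-1+1 = i from by omega] at hsh
          rw [← hsh]
          refine Finset.sum_congr rfl fun t _ => ?_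
          simp only [Nat.add_sub_cancel]
        have hc : ∑ s ∈ Icc 1 (m+3), cMat (m+3) s (i + j + 1)
            = ∑ t ∈ Icc (i-1) (m+1), ∑ s ∈ Icc 1 (m+2), cMat (m+2) s (t + j + 1) := by
          rw [show (m+3:ℕ) = (m+1)+2 from rfl, cMat_col_sum (m+1) (i+j+1) (by omega)]
          rw [show i+j+1-1 = i+j from by omega]
          have hsub : ∑ u ∈ Icc (i+j) (m+2), ∑ s ∈ Icc 1 (m+2), cMat (m+2) s u
              = ∑ u ∈ Icc (i+j) (m+j+2), ∑ s ∈ Icc 1 (m+2), cMat (m+2) s u := by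
            refine Finset.sum_subset (Icc_subset_Icc le_rfl (by omega)) ?_
            intro u hu hu'
            simp only [mem_Icc] at hu hu'
            exact Finset.sum_eq_zero fun s _ => cMat_right_gt _ _ _ (by omega)
          rw [hsub]
          have hsh := sum_Icc_shift (i-1) (m+1) (j+1)
            (fun u => ∑ s ∈ Icc 1 (m+2), cMat (m+2) s u)
          rw [show i-1+(j+1) = i+j from by omega, show m+1+(j+1) = m+j+2 from by omega] at hsh
          rw [← hsh]
          refine Finset.sum_congr rfl fun t _ => ?_
          rw [show t+(j+1) = t+j+1 from by omega]
        rw [ha, hb, hc, ← Finset.sum_add_distrib]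
        refine Finset.sum_congr rfl fun t ht => ?_
        simp only [mem_Icc] at ht
        rcases Nat.eq_zero_or_pos t with h0 | h1
        · subst h0
          rw [cMat_left_zero, zero_add, zero_add]
          exact (sum_Icc_drop_zero (m+2) (fun u => cMat (m+2) u (j+1))
            (cMat_left_zero _ _)).symm
        · exact ih t j (by simp only [mem_Icc]; omega) (by simp only [mem_Icc]; omega)
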